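/- Let $T \in \mathbb{N}$ and for each $t \in \{0, 1/T, \ldots, (T-1)/T\}$ suppose the vector field $v_\theta(\cdot, t) : \mathbb{R}^n \to \mathbb{R}^n$ is $C^1$ with Jacobian $J_x v_\theta(x,t) = -(\mu_t(x)/(1-t)) I_n + R_t(x)$, where $0 < \mu_t^{\min} \leq \mu_t(x) \leq \mu_t^{\max}$, $\|R_t(x)\|_{op} \leq \tilde\delta_t$, $\mu_t^{\min} > \tilde\delta_t (1-t)$, and $\mu_t^{\max} < T(1-t)$. Then the Euler step $\Psi_t(x) = x + \frac{1}{T} v_\theta(x,t)$ is a contraction on $(\mathbb{R}^n, \|\cdot\|_2)$ with factor $\tilde\kappa_t = (1 - \mu_t^{\min}/(T(1-t))) + \tilde\delta_t/T \in (0,1)$, and the composition $\Psi = \Psi_{(T-1)/T} \circ \cdots \circ \Psi_0$ has a unique fixed point reached at geometric rate $\prod_t \tilde\kappa_t < 1$. -/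

import Mathlib

/-- `fmComp Ψ T = Ψ (T-1) ∘ ⋯ ∘ Ψ 1 ∘ Ψ 0` (so `Ψ 0` is applied first). -/
def fmComp {E : Type*} (Ψ : ℕ → E → E) : ℕ → E → E
  | 0 => id
  | j + 1 => fun x => Ψ j (fmComp Ψ j x)

/-- flow matching fixed point theorem. Under condition (PC-FM), the
Euler step `Ψ_j(x) = x + (1/T) v(x, j/T)` is a contraction with factor
`κ̃_j = (1 - μ_min/(T(1 - j/T))) + δ̃_j/T ∈ (0,1)`, and the composition
`Ψ_{(T-1)/T} ∘ ⋯ ∘ Ψ_0` has a unique fixed point reached at geometric rate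
`∏_j κ̃_j < 1`. -/
theorem stmt_19 {n : ℕ} (T : ℕ) (hT : 0 < T)
    (v : ℕ → EuclideanSpace ℝ (Fin n) → EuclideanSpace ℝ (Fin n))
    (μ : ℕ → EuclideanSpace ℝ (Fin n) → ℝ)
    (R : ℕ → EuclideanSpace ℝ (Fin n) →
      (EuclideanSpace ℝ (Fin n) →L[ℝ] EuclideanSpace ℝ (Fin n)))
    (μmin μmax δ : ℕ → ℝ)
    (hdiff : ∀ j < T, Differentiable ℝ (v j))
    (hJ : ∀ j < T, ∀ x, fderiv ℝ (v j) x =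
      (-(μ j x / (1 - (j : ℝ) / T))) •
        ContinuousLinearMap.id ℝ (EuclideanSpace ℝ (Fin n)) + R j x)
    (hμ : ∀ j < T, ∀ x, μ j x ∈ Set.Icc (μmin j) (μmax j))
    (hμ0 : ∀ j < T, 0 < μmin j)
    (hR : ∀ j < T, ∀ x, ‖R j x‖ ≤ δ j)
    (h1 : ∀ j < T, δ j * (1 - (j : ℝ) / T) < μmin j)
    (h2 : ∀ j < T, μmax j < (T : ℝ) * (1 - (j : ℝ) / T)) :
    let κ : ℕ → ℝ := fun j => (1 - μmin j / ((T : ℝ) * (1 - (j : ℝ) / T))) + δ j / T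
    let Ψ : ℕ → EuclideanSpace ℝ (Fin n) → EuclideanSpace ℝ (Fin n) :=
      fun j x => x + ((T : ℝ))⁻¹ • v j x
    (∀ j < T, κ j ∈ Set.Ioo (0 : ℝ) 1 ∧
      ∀ x y, ‖Ψ j x - Ψ j y‖ ≤ κ j * ‖x - y‖) ∧
    (∏ j ∈ Finset.range T, κ j) < 1 ∧
    ∃ xstar, fmComp Ψ T xstar = xstar ∧
      (∀ y, fmComp Ψ T y = y → y = xstar) ∧
      ∀ x (k : ℕ), ‖(fmComp Ψ T)^[k] x - xstar‖ ≤
        (∏ j ∈ Finset.range T, κ j) ^ k * ‖x - xstar‖ := by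
  intro κ Ψ
  have hTpos : (0 : ℝ) < T := by exact_mod_cast hT
  -- basic positivity facts
  have ht : ∀ j < T, (0 : ℝ) < 1 - (j : ℝ) / T := by
    intro j hj
    have : (j : ℝ) / T < 1 := (div_lt_one hTpos).mpr (by exact_mod_cast hj)
    linarith
  have htT : ∀ j < T, (0 : ℝ) < (T : ℝ) * (1 - (j : ℝ) / T) := fun j hj =>
    mul_pos hTpos (ht j hj)
  have hδ0 : ∀ j < T, 0 ≤ δ j := fun j hj => le_trans (norm_nonneg _) (hR j hj 0)
  -- κ j ∈ (0,1)
  have hκIoo : ∀ j < T, κ j ∈ Set.Ioo (0 : ℝ) 1 := by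
    intro j hj
    have hμm := hμ0 j hj
    have hub := h2 j hj
    have hlb := h1 j hj
    have hTt := htT j hj
    have hmm : μmin j ≤ μmax j := le_trans (hμ j hj 0).1 (hμ j hj 0).2
    constructor
    · have : μmin j / ((T : ℝ) * (1 - (j : ℝ) / T)) < 1 :=
        (div_lt_one hTt).mpr (lt_of_le_of_lt hmm hub)
      have : 0 < 1 - μmin j / ((T : ℝ) * (1 - (j : ℝ) / T)) := by linarith
      have hd : 0 ≤ δ j / T := div_nonneg (hδ0 j hj) hTpos.le
      simp only [κ]; linarith
    · -- κ j < 1 ↔ δ j / T < μmin j / (T (1-t))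
      have hkey : δ j / T < μmin j / ((T : ℝ) * (1 - (j : ℝ) / T)) := by
        rw [div_lt_div_iff₀ hTpos hTt]
        have := ht j hj
        calc δ j * ((T : ℝ) * (1 - (j : ℝ) / T)) = δ j * (1 - (j : ℝ) / T) * T := by ring
          _ < μmin j * T := by
              exact mul_lt_mul_of_pos_right hlb hTpos
      simp only [κ]; linarith
  -- contraction property of each Ψ j
  have hΨlip : ∀ j < T, ∀ x y, ‖Ψ j x - Ψ j y‖ ≤ κ j * ‖x - y‖ := by
    intro j hj x y
    have hdv := hdiff j hj
    have hΨdiff : ∀ z, DifferentiableAt ℝ (Ψ j) z := fun z =>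
      (differentiableAt_fun_id).add ((hdv z).const_smul ((T : ℝ))⁻¹)
    have hfd : ∀ z, fderiv ℝ (Ψ j) z =
        ContinuousLinearMap.id ℝ (EuclideanSpace ℝ (Fin n))
          + ((T : ℝ))⁻¹ • fderiv ℝ (v j) z := by
      intro z
      have : fderiv ℝ (Ψ j) z = fderiv ℝ (fun x => x + ((T : ℝ))⁻¹ • v j x) z := rfl
      rw [this, fderiv_fun_add differentiableAt_fun_id ((hdv z).fun_const_smul _),
        fderiv_fun_const_smul (hdv z), fderiv_fun_id]
    have hbound : ∀ z, ‖fderiv ℝ (Ψ j) z‖ ≤ κ j := by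
      intro z
      rw [hfd z, hJ j hj z]
      set a : ℝ := μ j z / (1 - (j : ℝ) / T) with ha
      have heq : ContinuousLinearMap.id ℝ (EuclideanSpace ℝ (Fin n))
          + ((T : ℝ))⁻¹ • ((-a) • ContinuousLinearMap.id ℝ (EuclideanSpace ℝ (Fin n)) + R j z)
          = (1 - ((T : ℝ))⁻¹ * a) • ContinuousLinearMap.id ℝ (EuclideanSpace ℝ (Fin n))
            + ((T : ℝ))⁻¹ • R j z := by
        module
      rw [heq]
      have h1' : ‖(1 - ((T : ℝ))⁻¹ * a) • ContinuousLinearMap.id ℝ (EuclideanSpace ℝ (Fin n))‖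
          ≤ |1 - ((T : ℝ))⁻¹ * a| := by
        refine le_trans (ContinuousLinearMap.opNorm_smul_le _ _) ?_
        rw [Real.norm_eq_abs]
        calc |1 - ((T : ℝ))⁻¹ * a| * ‖ContinuousLinearMap.id ℝ (EuclideanSpace ℝ (Fin n))‖
            ≤ |1 - ((T : ℝ))⁻¹ * a| * 1 :=
              mul_le_mul_of_nonneg_left ContinuousLinearMap.norm_id_le (abs_nonneg _)
          _ = |1 - ((T : ℝ))⁻¹ * a| := mul_one _
      have h2' : ‖((T : ℝ))⁻¹ • R j z‖ ≤ δ j / T := by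
        refine le_trans (ContinuousLinearMap.opNorm_smul_le _ _) ?_
        rw [Real.norm_eq_abs, abs_of_nonneg (inv_nonneg.mpr hTpos.le), div_eq_inv_mul]
        exact mul_le_mul_of_nonneg_left (hR j hj z) (inv_nonneg.mpr hTpos.le)
      -- bound the scalar part
      have hta : ((T : ℝ))⁻¹ * a = μ j z / ((T : ℝ) * (1 - (j : ℝ) / T)) := by
        rw [ha]
        field_simp
      have hmem := hμ j hj z
      have hTt := htT j hj
      have habs : |1 - ((T : ℝ))⁻¹ * a| ≤ 1 - μmin j / ((T : ℝ) * (1 - (j : ℝ) / T)) := by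
        rw [hta, abs_le]
        constructor
        · have hlt : μ j z / ((T : ℝ) * (1 - (j : ℝ) / T)) < 1 :=
            (div_lt_one hTt).mpr (lt_of_le_of_lt hmem.2 (h2 j hj))
          have h0 : 0 < μmin j / ((T : ℝ) * (1 - (j : ℝ) / T)) :=
            div_pos (hμ0 j hj) hTt
          have hle1 : μmin j / ((T : ℝ) * (1 - (j : ℝ) / T)) ≤ 1 := by
            apply (div_le_one hTt).mpr
            exact le_of_lt (lt_of_le_of_lt (le_trans hmem.1 hmem.2) (h2 j hj))
          linarith
        · have : μmin j / ((T : ℝ) * (1 - (j : ℝ) / T))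
              ≤ μ j z / ((T : ℝ) * (1 - (j : ℝ) / T)) :=
            (div_le_div_iff_of_pos_right hTt).mpr hmem.1
          linarith
      calc ‖(1 - ((T : ℝ))⁻¹ * a) • ContinuousLinearMap.id ℝ (EuclideanSpace ℝ (Fin n))
            + ((T : ℝ))⁻¹ • R j z‖
          ≤ |1 - ((T : ℝ))⁻¹ * a| + δ j / T :=
            le_trans (norm_add_le _ _) (add_le_add h1' h2')
        _ ≤ κ j := by simp only [κ]; linarith
    exact convex_univ.norm_image_sub_le_of_norm_fderiv_le
      (fun z _ => hΨdiff z) (fun z _ => hbound z) (Set.mem_univ y) (Set.mem_univ x)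
  refine ⟨fun j hj => ⟨hκIoo j hj, hΨlip j hj⟩, ?_, ?_⟩
  · -- product < 1
    have := Finset.prod_lt_prod_of_nonempty
      (f := κ) (g := fun _ => (1 : ℝ)) (s := Finset.range T)
      (fun i hi => (hκIoo i (Finset.mem_range.mp hi)).1)
      (fun i hi => (hκIoo i (Finset.mem_range.mp hi)).2)
      (Finset.nonempty_range_iff.mpr hT.ne')
    simpa using this
  · -- fixed point part
    set P : ℝ := ∏ j ∈ Finset.range T, κ j with hP
    have hPpos : 0 < P :=
      Finset.prod_pos fun i hi => (hκIoo i (Finset.mem_range.mp hi)).1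
    have hPlt : P < 1 := by
      have := Finset.prod_lt_prod_of_nonempty
        (f := κ) (g := fun _ => (1 : ℝ)) (s := Finset.range T)
        (fun i hi => (hκIoo i (Finset.mem_range.mp hi)).1)
        (fun i hi => (hκIoo i (Finset.mem_range.mp hi)).2)
        (Finset.nonempty_range_iff.mpr hT.ne')
      simpa using this
    -- Lipschitz bound on the composition
    have hcomp : ∀ m ≤ T, ∀ x y,
        ‖fmComp Ψ m x - fmComp Ψ m y‖ ≤ (∏ j ∈ Finset.range m, κ j) * ‖x - y‖ := by
      intro m
      induction m with
      | zero => intro _ x y; simp [fmComp]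
      | succ m ih =>
        intro hm x y
        have hm' : m ≤ T := Nat.le_of_succ_le hm
        have hmT : m < T := hm
        have hκpos := hκIoo m hmT |>.1
        calc ‖fmComp Ψ (m+1) x - fmComp Ψ (m+1) y‖
            = ‖Ψ m (fmComp Ψ m x) - Ψ m (fmComp Ψ m y)‖ := rfl
          _ ≤ κ m * ‖fmComp Ψ m x - fmComp Ψ m y‖ := hΨlip m hmT _ _
          _ ≤ κ m * ((∏ j ∈ Finset.range m, κ j) * ‖x - y‖) :=
              mul_le_mul_of_nonneg_left (ih hm' x y) hκpos.le
          _ = (∏ j ∈ Finset.range (m+1), κ j) * ‖x - y‖ := by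
              rw [Finset.prod_range_succ]; ring
    have hlipT : ∀ x y, ‖fmComp Ψ T x - fmComp Ψ T y‖ ≤ P * ‖x - y‖ :=
      hcomp T le_rfl
    -- contracting map
    set f := fmComp Ψ T with hf
    set K : NNReal := ⟨P, hPpos.le⟩ with hK
    have hfl : LipschitzWith K f := by
      apply LipschitzWith.of_dist_le_mul
      intro x y
      rw [dist_eq_norm, dist_eq_norm]
      exact hlipT x y
    have hcontr : ContractingWith K f := ⟨by exact_mod_cast hPlt, hfl⟩
    have : Nonempty (EuclideanSpace ℝ (Fin n)) := ⟨0⟩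
    refine ⟨hcontr.fixedPoint f, hcontr.fixedPoint_isFixedPt, ?_, ?_⟩
    · intro y hy
      exact hcontr.fixedPoint_unique hy
    · intro x k
      induction k with
      | zero => simp
      | succ k ih =>
        have hfix : f (hcontr.fixedPoint f) = hcontr.fixedPoint f :=
          hcontr.fixedPoint_isFixedPt
        calc ‖f^[k+1] x - hcontr.fixedPoint f‖
            = ‖f (f^[k] x) - f (hcontr.fixedPoint f)‖ := by
              rw [Function.iterate_succ_apply', hfix]
          _ ≤ P * ‖f^[k] x - hcontr.fixedPoint f‖ := hlipT _ _
          _ ≤ P * (P ^ k * ‖x - hcontr.fixedPoint f‖) :=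
              mul_le_mul_of_nonneg_left ih hPpos.le
          _ = P ^ (k+1) * ‖x - hcontr.fixedPoint f‖ := by ring
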